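/- Let 𝒢 be a groupoid with 𝒢₀ finite, A a unital 𝒢-graded algebra, X a finite split 𝒢-set via α, and fix x ∈ X. If Σ_{g∈𝒢, α_g(y)=x} A_{g⁻¹} A_g = Σ_{g∈𝒢} A_{d(g)} for all y ∈ X, then the Morita context [A #_α^𝒢 X, V^x, ^xV, A^{𝒢_x}, [ , ], ( , )] is strict (the map [ , ] : {^xV} ⊗_{A^{𝒢_x}} V^x → A #_α^𝒢 X is surjective); consequently A^{𝒢_x} and A #_α^𝒢 X are Morita equivalent. -/

import Mathlib

open scoped Classical

noncomputable section

universe u v w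

/-- A groupoid, presented as a set of morphisms with partially defined
composition.  `s g` is the domain (source) identity `d(g)`, `t g` the range
(target) identity `r(g)`; `mul g h` is the composite `gh`, meaningful when
`s g = t h`. -/
structure Gpd (G : Type u) where
  s : G → G
  t : G → G
  inv : G → G
  mul : G → G → G
  s_s : ∀ g, s (s g) = s g
  t_s : ∀ g, t (s g) = s g
  s_t : ∀ g, s (t g) = t g
  t_t : ∀ g, t (t g) = t g
  s_mul : ∀ g h, s g = t h → s (mul g h) = s h
  t_mul : ∀ g h, s g = t h → t (mul g h) = t g
  mul_assoc : ∀ g h l, s g = t h → s h = t l → mul (mul g h) l = mul g (mul h l)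
  mul_src : ∀ g, mul g (s g) = g
  tgt_mul : ∀ g, mul (t g) g = g
  s_inv : ∀ g, s (inv g) = t g
  t_inv : ∀ g, t (inv g) = s g
  inv_mul : ∀ g, mul (inv g) g = s g
  mul_inv : ∀ g, mul g (inv g) = t g

namespace Gpd

variable {G : Type u}

/-- `e` is an object (identity) of the groupoid. -/
def obj (𝒢 : Gpd G) (e : G) : Prop := 𝒢.s e = e

/-- The set `𝒢₀` of objects of the groupoid. -/
def Objs (𝒢 : Gpd G) : Set G := {e | 𝒢.obj e}

end Gpd

/-- An action `α = (X_g, α_g)` of a groupoid `𝒢` on a set `X`: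
`car g` is the subset `X_g` and `act g` restricts to the bijection
`α_g : X_{g⁻¹} → X_g`. -/
structure GpdSetAction {G : Type u} (𝒢 : Gpd G) (X : Type v) where
  car : G → Set X
  act : G → X → X
  car_t : ∀ g, car g = car (𝒢.t g)
  bijOn : ∀ g, Set.BijOn (act g) (car (𝒢.inv g)) (car g)
  act_id : ∀ e, 𝒢.obj e → ∀ x ∈ car e, act e x = x
  act_mul : ∀ g h, 𝒢.s g = 𝒢.t h → ∀ x ∈ car (𝒢.inv h),
    act g (act h x) = act (𝒢.mul g h) x

/-- `X` is a split `𝒢`-set: `X` is the disjoint union of the `X_e`, `e ∈ 𝒢₀`. -/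
def GpdSetAction.Split {G : Type u} {𝒢 : Gpd G} {X : Type v} (α : GpdSetAction 𝒢 X) : Prop :=
  ∀ x : X, ∃! e : G, 𝒢.obj e ∧ x ∈ α.car e

/-- The action is fully faithful: if `α_g` fixes some `x ∈ X_g ∩ X_{g⁻¹}`
then `g` is an identity. -/
def GpdSetAction.FullyFaithful {G : Type u} {𝒢 : Gpd G} {X : Type v}
    (α : GpdSetAction 𝒢 X) : Prop :=
  ∀ g x, x ∈ α.car g ∩ α.car (𝒢.inv g) → α.act g x = x → 𝒢.obj g

/-- A `𝒢`-grading of the `k`-algebra `A`:  `A = ⊕_{g ∈ 𝒢} A_g` with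
`A_g A_h ⊆ A_{gh}` for composable `g, h` and `A_g A_h = 0` otherwise. -/
structure GpdGrading {G : Type u} (𝒢 : Gpd G) (k : Type v) (A : Type w)
    [Field k] [Ring A] [Algebra k A] where
  comp : G → Submodule k A
  internal : DirectSum.IsInternal comp
  mul_mem : ∀ g h, 𝒢.s g = 𝒢.t h → ∀ a ∈ comp g, ∀ b ∈ comp h, a * b ∈ comp (𝒢.mul g h)
  mul_eq_zero : ∀ g h, 𝒢.s g ≠ 𝒢.t h → ∀ a ∈ comp g, ∀ b ∈ comp h, a * b = 0

/-- The homogeneous component of degree `g` of `a ∈ A`. -/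
noncomputable def GpdGrading.proj {G : Type u} {𝒢 : Gpd G} {k : Type v} {A : Type w}
    [Field k] [Ring A] [Algebra k A] (𝒜 : GpdGrading 𝒢 k A) (g : G) (a : A) : A :=
  ((Equiv.ofBijective _ 𝒜.internal).symm a g : A)

/-- `one : G → A` is a family of local units for the grading: each `one e`
(`e ∈ 𝒢₀`) is an identity element of `A_e` and `1_A = Σ_{e ∈ 𝒢₀} 1_e`. -/
def IsIdFamily {G : Type u} {𝒢 : Gpd G} {k : Type v} {A : Type w}
    [Field k] [Ring A] [Algebra k A] (𝒜 : GpdGrading 𝒢 k A) (one : G → A) : Prop :=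
  (∀ e, 𝒢.obj e → one e ∈ 𝒜.comp e ∧ ∀ a ∈ 𝒜.comp e, one e * a = a ∧ a * one e = a) ∧
  (1 : A) = ∑ᶠ e ∈ 𝒢.Objs, one e

/-- The multiplication of the smash product `A #_α^𝒢 X`, defined on the
ambient space of formal sums `Σ a_{(g,x)} δ_{(g,x)}`:
`(a δ_{(g,x)}) (b δ_{(h,y)}) = (a b) δ_{(gh, y)}` when `d(g) = r(h)` and
`α_h(y) = x`, and `0` otherwise. -/
noncomputable def smashMul {G : Type u} {𝒢 : Gpd G} {X : Type v} {A : Type w} [Ring A]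
    (α : GpdSetAction 𝒢 X) (f₁ f₂ : (G × X) →₀ A) : (G × X) →₀ A :=
  f₁.sum fun p a => f₂.sum fun q b =>
    if 𝒢.s p.1 = 𝒢.t q.1 ∧ α.act q.1 q.2 = p.2
    then Finsupp.single (𝒢.mul p.1 q.1, q.2) (a * b) else 0

/-- The underlying set of the smash product `A #_α^𝒢 X = ⊕_{g} ⊕_{x ∈ X_{d(g)}} A_g δ_x`:
those formal sums whose `(g,x)`-coefficient lies in `A_g`, supported on pairs
with `x ∈ X_{d(g)}`. -/
def smashSet {G : Type u} {𝒢 : Gpd G} {X : Type v} {k : Type*} {A : Type w}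
    [Field k] [Ring A] [Algebra k A]
    (α : GpdSetAction 𝒢 X) (𝒜 : GpdGrading 𝒢 k A) : Set ((G × X) →₀ A) :=
  {f | ∀ p : G × X, f p ∈ 𝒜.comp p.1 ∧ (f p ≠ 0 → p.2 ∈ α.car (𝒢.s p.1))}

/-- The identity element `Σ_{e ∈ 𝒢₀} Σ_{x ∈ X_e} 1_e δ_x` of the smash product. -/
noncomputable def smashOne {G : Type u} {𝒢 : Gpd G} {X : Type v} {A : Type w} [Ring A]
    (α : GpdSetAction 𝒢 X) (one : G → A) : (G × X) →₀ A :=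
  ∑ᶠ e ∈ 𝒢.Objs, ∑ᶠ x ∈ α.car e, Finsupp.single ((e, x) : G × X) (one e)

/-- The `x`-stabilizer `𝒢_x = {g ∈ 𝒢_e : α_g(x) = x}` (where `x ∈ X_e`). -/
def stabilizer {G : Type u} {𝒢 : Gpd G} {X : Type v} (α : GpdSetAction 𝒢 X)
    (x : X) : Set G :=
  {g | 𝒢.s g = 𝒢.t g ∧ x ∈ α.car (𝒢.s g) ∧ α.act g x = x}

/-- `A^{𝒢_x} = ⊕_{g ∈ 𝒢_x} A_g`, the graded subalgebra supported on the
stabilizer of `x`. -/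
def stabSubalg {G : Type u} {𝒢 : Gpd G} {X : Type v} {k : Type*} {A : Type w}
    [Field k] [Ring A] [Algebra k A]
    (α : GpdSetAction 𝒢 X) (𝒜 : GpdGrading 𝒢 k A) (x : X) : Set A :=
  {a | ∀ g, 𝒜.proj g a ≠ 0 → g ∈ stabilizer α x}

/-- `^xV = ⊕_{y ∈ X} V_{x,y} = ⊕_{h : d(h) = e} A_h` (where `x ∈ X_e`). -/
def xVset {G : Type u} {𝒢 : Gpd G} {X : Type v} {k : Type*} {A : Type w}
    [Field k] [Ring A] [Algebra k A]
    (α : GpdSetAction 𝒢 X) (𝒜 : GpdGrading 𝒢 k A) (x : X) : Set A :=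
  {a | ∀ h, 𝒜.proj h a ≠ 0 → x ∈ α.car (𝒢.s h)}

/-- `V^x = ⊕_{y ∈ X} V_{y,x} = ⊕_{h : α_h(y) = x for some y ∈ X_{d(h)}} A_h`. -/
def Vxset {G : Type u} {𝒢 : Gpd G} {X : Type v} {k : Type*} {A : Type w}
    [Field k] [Ring A] [Algebra k A]
    (α : GpdSetAction 𝒢 X) (𝒜 : GpdGrading 𝒢 k A) (x : X) : Set A :=
  {a | ∀ h, 𝒜.proj h a ≠ 0 → ∃ y ∈ α.car (𝒢.s h), α.act h y = x}

/-- The `y`-component `w_y ∈ V_{x,y}` of `w ∈ ^xV` with respect to the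
grading `^xV = ⊕_{y ∈ X} V_{x,y}`. -/
noncomputable def xVcomp {G : Type u} {𝒢 : Gpd G} {X : Type v} {k : Type*} {A : Type w}
    [Field k] [Ring A] [Algebra k A]
    (α : GpdSetAction 𝒢 X) (𝒜 : GpdGrading 𝒢 k A) (x : X) (w : A) (y : X) : A :=
  ∑ᶠ h ∈ {h | x ∈ α.car (𝒢.s h) ∧ α.act h x = y}, 𝒜.proj h w

/-- The `z`-component `v_z ∈ V_{z,x}` of `v ∈ V^x` with respect to the
grading `V^x = ⊕_{z ∈ X} V_{z,x}`. -/
noncomputable def Vxcomp {G : Type u} {𝒢 : Gpd G} {X : Type v} {k : Type*} {A : Type w}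
    [Field k] [Ring A] [Algebra k A]
    (α : GpdSetAction 𝒢 X) (𝒜 : GpdGrading 𝒢 k A) (x : X) (v : A) (z : X) : A :=
  ∑ᶠ h ∈ {h | z ∈ α.car (𝒢.s h) ∧ α.act h z = x}, 𝒜.proj h v

/-- The left action of `A #_α^𝒢 X` on `^xV`: `(a_g δ_y) · w = a_g w_y`. -/
noncomputable def lSmashAct {G : Type u} {𝒢 : Gpd G} {X : Type v} {k : Type*} {A : Type w}
    [Field k] [Ring A] [Algebra k A]
    (α : GpdSetAction 𝒢 X) (𝒜 : GpdGrading 𝒢 k A) (x : X)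
    (f : (G × X) →₀ A) (w : A) : A :=
  f.sum fun p a => a * xVcomp α 𝒜 x w p.2

/-- The right action of `A #_α^𝒢 X` on `V^x`: `v · (a_g δ_y) = (v a_g)_y`. -/
noncomputable def rSmashAct {G : Type u} {𝒢 : Gpd G} {X : Type v} {k : Type*} {A : Type w}
    [Field k] [Ring A] [Algebra k A]
    (α : GpdSetAction 𝒢 X) (𝒜 : GpdGrading 𝒢 k A) (x : X)
    (v : A) (f : (G × X) →₀ A) : A :=
  f.sum fun p a => Vxcomp α 𝒜 x (v * a) p.2

/-- The Morita pairing `( , ) : V^x ⊗_{A #_α^𝒢 X} {^xV} → A^{𝒢_x}`,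
`(v, w) = Σ_{g ∈ 𝒢_x} (vw)_g`. -/
noncomputable def moritaPair {G : Type u} {𝒢 : Gpd G} {X : Type v} {k : Type*} {A : Type w}
    [Field k] [Ring A] [Algebra k A]
    (α : GpdSetAction 𝒢 X) (𝒜 : GpdGrading 𝒢 k A) (x : X) (v w : A) : A :=
  ∑ᶠ g ∈ stabilizer α x, 𝒜.proj g (v * w)

/-- The Morita pairing `[ , ] : {^xV} ⊗_{A^{𝒢_x}} V^x → A #_α^𝒢 X`,
`[w, v] = Σ_{z ∈ X} (w v_z) δ_z`. -/
noncomputable def moritaBrack {G : Type u} {𝒢 : Gpd G} {X : Type v} {k : Type*} {A : Type w}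
    [Field k] [Ring A] [Algebra k A]
    (α : GpdSetAction 𝒢 X) (𝒜 : GpdGrading 𝒢 k A) (x : X) (w v : A) : (G × X) →₀ A :=
  ∑ᶠ z : X, ∑ᶠ g : G,
    Finsupp.single ((g, z) : G × X) (𝒜.proj g (w * Vxcomp α 𝒜 x v z))

section Helpers
variable {G : Type u} {𝒢 : Gpd G} {k : Type*} {A : Type w}
  [Field k] [Ring A] [Algebra k A] (𝒜 : GpdGrading 𝒢 k A)

lemma proj_mem (g : G) (a : A) : 𝒜.proj g a ∈ 𝒜.comp g := ((Equiv.ofBijective _ 𝒜.internal).symm a g).2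

lemma symm_of_mem {g : G} {a : A} (h : a ∈ 𝒜.comp g) :
    (Equiv.ofBijective _ 𝒜.internal).symm a
      = DirectSum.of (fun i => ↥(𝒜.comp i)) g ⟨a, h⟩ := by
  rw [Equiv.symm_apply_eq]
  exact (DirectSum.coeAddMonoidHom_of 𝒜.comp g ⟨a, h⟩).symm

lemma proj_of_mem {g : G} {a : A} (h : a ∈ 𝒜.comp g) : 𝒜.proj g a = a := by
  unfold GpdGrading.proj
  rw [symm_of_mem 𝒜 h, DirectSum.of_eq_same]

lemma proj_of_mem_ne {g g' : G} {a : A} (h : a ∈ 𝒜.comp g) (hne : g' ≠ g) :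
    𝒜.proj g' a = 0 := by
  unfold GpdGrading.proj
  rw [symm_of_mem 𝒜 h, DirectSum.of_eq_of_ne _ _ _ hne]
  rfl

lemma apply_symm (c : A) :
    (DirectSum.coeAddMonoidHom 𝒜.comp) ((Equiv.ofBijective _ 𝒜.internal).symm c) = c :=
  (Equiv.ofBijective _ 𝒜.internal).apply_symm_apply c

lemma proj_add (g : G) (a b : A) : 𝒜.proj g (a + b) = 𝒜.proj g a + 𝒜.proj g b := by
  unfold GpdGrading.proj
  have : (Equiv.ofBijective _ 𝒜.internal).symm (a + b)
      = (Equiv.ofBijective _ 𝒜.internal).symm a + (Equiv.ofBijective _ 𝒜.internal).symm b := by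
    apply (Equiv.ofBijective _ 𝒜.internal).injective
    show (DirectSum.coeAddMonoidHom 𝒜.comp) _ = (DirectSum.coeAddMonoidHom 𝒜.comp) _
    rw [apply_symm, map_add, apply_symm, apply_symm]
  rw [this]
  rfl

lemma proj_zero (g : G) : 𝒜.proj g 0 = 0 := by
  unfold GpdGrading.proj
  have : (Equiv.ofBijective _ 𝒜.internal).symm (0 : A) = 0 := by
    apply (Equiv.ofBijective _ 𝒜.internal).injective
    show (DirectSum.coeAddMonoidHom 𝒜.comp) _
        = (DirectSum.coeAddMonoidHom 𝒜.comp) (0 : DirectSum G fun i => ↥(𝒜.comp i))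
    rw [apply_symm, map_zero]
  rw [this]; rfl

/-- `proj g` as an additive monoid hom. -/
noncomputable def projHom (g : G) : A →+ A where
  toFun := 𝒜.proj g
  map_zero' := proj_zero 𝒜 g
  map_add' := proj_add 𝒜 g

lemma proj_support_finite (a : A) : (Function.support fun g => 𝒜.proj g a).Finite := by
  apply Set.Finite.subset (DFinsupp.support ((Equiv.ofBijective _ 𝒜.internal).symm a)).finite_toSet
  intro g hg
  simp only [Function.mem_support] at hg
  simp only [Finset.coe_sort_coe, Finset.mem_coe, DFinsupp.mem_support_iff]
  intro h0
  apply hg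
  unfold GpdGrading.proj
  rw [h0]; rfl

lemma sum_proj (a : A) :
    ∑ g ∈ (DFinsupp.support ((Equiv.ofBijective _ 𝒜.internal).symm a)), 𝒜.proj g a = a := by
  conv_rhs => rw [← (Equiv.ofBijective _ 𝒜.internal).apply_symm_apply a]
  conv_rhs => rw [show ∀ y, (Equiv.ofBijective _ 𝒜.internal) y = DirectSum.coeAddMonoidHom 𝒜.comp y from fun _ => rfl,
    ← DirectSum.sum_support_of ((Equiv.ofBijective _ 𝒜.internal).symm a)]
  rw [map_sum]
  exact Finset.sum_congr rfl fun g _ => (DirectSum.coeAddMonoidHom_of _ _ _).symm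

/-- finsum over a set of a function supported at a single point. -/
lemma finsum_mem_single {ι : Type*} {M : Type*} [AddCommMonoid M] (f : ι → M) (i : ι)
    (h : ∀ j, j ≠ i → f j = 0) (S : Set ι) :
    ∑ᶠ j ∈ S, f j = if i ∈ S then f i else 0 := by
  rw [finsum_mem_def, finsum_eq_single _ i (fun j hj => by
    simp [Set.indicator_apply, h j hj])]
  simp [Set.indicator_apply]

lemma proj_eq_ite {g g' : G} {a : A} (h : a ∈ 𝒜.comp g) :
    𝒜.proj g' a = if g' = g then a else 0 := by
  split
  · subst ‹g' = g›; exact proj_of_mem 𝒜 h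
  · exact proj_of_mem_ne 𝒜 h ‹g' ≠ g›

/-- Right local unit: for `a ∈ A_g`, `a * 1_{s g} = a`. -/
lemma mul_proj_one {g : G} {a : A} (ha : a ∈ 𝒜.comp g) :
    a * 𝒜.proj (𝒢.s g) 1 = a := by
  classical
  set D := DFinsupp.support ((Equiv.ofBijective _ 𝒜.internal).symm (1 : A)) with hD
  have h1 : (1 : A) = ∑ c ∈ D, 𝒜.proj c 1 := (sum_proj 𝒜 1).symm
  have key : ∀ c : G, 𝒜.proj g (a * 𝒜.proj c 1) = if c = 𝒢.s g then a * 𝒜.proj c 1 else 0 := by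
    intro c
    by_cases hc : 𝒢.s g = 𝒢.t c
    · have hmem : a * 𝒜.proj c 1 ∈ 𝒜.comp (𝒢.mul g c) :=
        𝒜.mul_mem g c hc a ha _ (proj_mem 𝒜 c 1)
      rw [proj_eq_ite 𝒜 hmem]
      by_cases hcg : c = 𝒢.s g
      · subst hcg
        simp [𝒢.mul_src]
      · have : g ≠ 𝒢.mul g c := by
          intro hgg
          apply hcg
          have h2 : 𝒢.mul (𝒢.inv g) (𝒢.mul g c) = 𝒢.mul (𝒢.inv g) g := by rw [← hgg]
          rw [← 𝒢.mul_assoc (𝒢.inv g) g c (by rw [𝒢.s_inv]) hc, 𝒢.inv_mul] at h2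
          rw [hc, 𝒢.tgt_mul] at h2
          exact h2.trans hc.symm
        simp [this, hcg]
    · rw [𝒜.mul_eq_zero g c hc a ha _ (proj_mem 𝒜 c 1), proj_zero]
      have : c ≠ 𝒢.s g := fun h => hc (by rw [h, 𝒢.t_s])
      simp [this]
  have := proj_of_mem 𝒜 ha
  symm
  calc a = 𝒜.proj g (a * 1) := by rw [mul_one, proj_of_mem 𝒜 ha]
    _ = 𝒜.proj g (∑ c ∈ D, a * 𝒜.proj c 1) := by rw [← Finset.mul_sum, ← h1]
    _ = ∑ c ∈ D, 𝒜.proj g (a * 𝒜.proj c 1) := map_sum (projHom 𝒜 g) _ _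
    _ = a * 𝒜.proj (𝒢.s g) 1 := by
        rw [Finset.sum_congr rfl (fun c _ => key c)]
        rw [Finset.sum_ite_eq' D (𝒢.s g) (fun c => a * 𝒜.proj c 1)]
        split
        · rfl
        · rename_i hns
          have : 𝒜.proj (𝒢.s g) 1 = 0 := by
            by_contra h0
            exact hns (by
              rw [hD, DFinsupp.mem_support_iff]
              intro hz
              apply h0
              unfold GpdGrading.proj
              rw [hz]; rfl)
          rw [this, mul_zero]

end Helpers

section Helpers2
variable {G : Type u} {𝒢 : Gpd G} {X : Type v} {k : Type*} {A : Type w}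
  [Field k] [Ring A] [Algebra k A]
  (α : GpdSetAction 𝒢 X) (𝒜 : GpdGrading 𝒢 k A)

lemma split_unique (hsplit : α.Split) {y : X} {e₁ e₂ : G}
    (h₁ : 𝒢.obj e₁) (hc₁ : y ∈ α.car e₁) (h₂ : 𝒢.obj e₂) (hc₂ : y ∈ α.car e₂) :
    e₁ = e₂ := by
  obtain ⟨e', -, hu⟩ := hsplit y
  rw [hu e₁ ⟨h₁, hc₁⟩, hu e₂ ⟨h₂, hc₂⟩]

lemma car_inv (h : G) : α.car (𝒢.inv h) = α.car (𝒢.s h) := by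
  rw [α.car_t (𝒢.inv h), 𝒢.t_inv]

lemma car_tgt (h : G) : α.car h = α.car (𝒢.t h) := α.car_t h

lemma act_mem_tgt {h : G} {y : X} (hy : y ∈ α.car (𝒢.s h)) : α.act h y ∈ α.car (𝒢.t h) := by
  rw [← car_tgt]
  exact (α.bijOn h).mapsTo (by rwa [car_inv])

lemma act_inj {h : G} {y z : X} (hy : y ∈ α.car (𝒢.s h)) (hz : z ∈ α.car (𝒢.s h))
    (he : α.act h y = α.act h z) : y = z :=
  (α.bijOn h).injOn (by rwa [car_inv]) (by rwa [car_inv]) he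

lemma act_inv_fixed {h : G} {y : X} (hy : y ∈ α.car (𝒢.s h)) (hfix : α.act h y = y) :
    α.act (𝒢.inv h) y = y := by
  conv_lhs => rw [← hfix]
  rw [α.act_mul (𝒢.inv h) h (by rw [𝒢.s_inv]) y (by rwa [car_inv]), 𝒢.inv_mul]
  exact α.act_id _ (𝒢.s_s h) y hy

lemma Vxcomp_homog {h : G} {v : A} (hv : v ∈ 𝒜.comp h) (x z : X) :
    Vxcomp α 𝒜 x v z = if (z ∈ α.car (𝒢.s h) ∧ α.act h z = x) then v else 0 := by
  unfold Vxcomp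
  rw [finsum_mem_single _ h (fun j hj => proj_of_mem_ne 𝒜 hv hj)]
  rw [proj_of_mem 𝒜 hv]
  simp only [Set.mem_setOf_eq]

lemma moritaBrack_eq_single {h g : G} {v w : A} {x y : X}
    (hv : v ∈ 𝒜.comp h) (hy : y ∈ α.car (𝒢.s h)) (hyx : α.act h y = x)
    (hwv : w * v ∈ 𝒜.comp g) :
    moritaBrack α 𝒜 x w v = Finsupp.single ((g, y) : G × X) (w * v) := by
  unfold moritaBrack
  have hVx : ∀ z, Vxcomp α 𝒜 x v z = if z = y then v else 0 := by
    intro z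
    rw [Vxcomp_homog α 𝒜 hv]
    congr 1
    simp only [eq_iff_iff]
    constructor
    · rintro ⟨hz, hzx⟩
      exact act_inj α hz hy (by rw [hzx, hyx])
    · rintro rfl
      exact ⟨hy, hyx⟩
  have hinner : ∀ z : X, (∑ᶠ g' : G, Finsupp.single ((g', z) : G × X)
      (𝒜.proj g' (w * Vxcomp α 𝒜 x v z)))
      = if z = y then Finsupp.single ((g, y) : G × X) (w * v) else 0 := by
    intro z
    rw [hVx z]
    by_cases hz : z = y
    · subst hz
      rw [if_pos rfl, if_pos rfl]
      rw [finsum_eq_single _ g (fun g' hne => by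
        rw [proj_of_mem_ne 𝒜 hwv hne, Finsupp.single_zero])]
      rw [proj_of_mem 𝒜 hwv]
    · rw [if_neg hz, if_neg hz]
      simp only [mul_zero, proj_zero, Finsupp.single_zero, finsum_zero]
  rw [finsum_congr hinner]
  rw [finsum_eq_single _ y (fun z hz => if_neg hz), if_pos rfl]

lemma moritaPair_eq {g : G} {v w : A} {x : X}
    (hvw : v * w ∈ 𝒜.comp g) (hg : g ∈ stabilizer α x) :
    moritaPair α 𝒜 x v w = v * w := by
  unfold moritaPair
  rw [finsum_mem_single _ g (fun j hj => proj_of_mem_ne 𝒜 hvw hj), if_pos hg,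
    proj_of_mem 𝒜 hvw]

end Helpers2

/-- If `Σ_{g ∈ 𝒢, α_g(y) = x} A_{g⁻¹} A_g = Σ_{g ∈ 𝒢} A_{d(g)}`
for all `y ∈ X`, then the Morita context
`[A #_α^𝒢 X, V^x, ^xV, A^{𝒢_x}, [ , ], ( , )]` is strict, i.e. the map
`[ , ] : ^xV ⊗_{A^{𝒢_x}} V^x → A #_α^𝒢 X` is surjective; consequently
`A^{𝒢_x}` and `A #_α^𝒢 X` are Morita equivalent (both pairings of the context
are surjective). -/
theorem sum_condition_implies_morita_strict
    {G : Type u} (𝒢 : Gpd G) {X : Type v}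
    (k : Type*) (A : Type w) [Field k] [Ring A] [Algebra k A] [Finite X]
    (hG₀ : 𝒢.Objs.Finite) (𝒜 : GpdGrading 𝒢 k A)
    (α : GpdSetAction 𝒢 X) (hsplit : α.Split)
    (x : X) (e : G) (he : 𝒢.obj e) (hx : x ∈ α.car e)
    (hsum : ∀ y : X,
      (⨆ g ∈ {g : G | y ∈ α.car (𝒢.s g) ∧ α.act g y = x},
        (𝒜.comp (𝒢.inv g) * 𝒜.comp g : Submodule k A))
      = ⨆ g : G, 𝒜.comp (𝒢.s g)) :
    -- `[ , ]` is surjective: the Morita context is strict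
    (∀ f ∈ smashSet α 𝒜, ∃ (n : ℕ) (w v : Fin n → A),
      (∀ i, w i ∈ xVset α 𝒜 x ∧ v i ∈ Vxset α 𝒜 x) ∧
      f = ∑ i, moritaBrack α 𝒜 x (w i) (v i)) ∧
    -- consequently `A^{𝒢_x}` and `A #_α^𝒢 X` are Morita equivalent:
    -- `( , )` is surjective as well
    (∀ a ∈ stabSubalg α 𝒜 x, ∃ (n : ℕ) (v w : Fin n → A),
      (∀ i, v i ∈ Vxset α 𝒜 x ∧ w i ∈ xVset α 𝒜 x) ∧
      a = ∑ i, moritaPair α 𝒜 x (v i) (w i)) := by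
  classical
  constructor
  · -- Part 1: surjectivity of `[ , ]`.
    intro f hf
    set P : ((G × X) →₀ A) → Prop := fun f₀ => ∃ (n : ℕ) (w v : Fin n → A),
      (∀ i, w i ∈ xVset α 𝒜 x ∧ v i ∈ Vxset α 𝒜 x) ∧
      f₀ = ∑ i, moritaBrack α 𝒜 x (w i) (v i) with hPdef
    have hP0 : P 0 := ⟨0, fun i => i.elim0, fun i => i.elim0, fun i => i.elim0, by simp⟩
    have hPadd : ∀ f₁ f₂, P f₁ → P f₂ → P (f₁ + f₂) := by
      rintro f₁ f₂ ⟨n₁, w₁, v₁, hc₁, rfl⟩ ⟨n₂, w₂, v₂, hc₂, rfl⟩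
      refine ⟨n₁ + n₂, Fin.append w₁ w₂, Fin.append v₁ v₂, ?_, ?_⟩
      · intro i
        refine Fin.addCases (motive := fun i =>
          Fin.append w₁ w₂ i ∈ xVset α 𝒜 x ∧ Fin.append v₁ v₂ i ∈ Vxset α 𝒜 x)
          (fun j => ?_) (fun j => ?_) i
        · simp only [Fin.append_left]; exact hc₁ j
        · simp only [Fin.append_right]; exact hc₂ j
      · rw [Fin.sum_univ_add]
        congr 1
        · exact Finset.sum_congr rfl fun j _ => by rw [Fin.append_left, Fin.append_left]
        · exact Finset.sum_congr rfl fun j _ => by rw [Fin.append_right, Fin.append_right]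
    show P f
    have hrepr : ∑ p ∈ f.support, Finsupp.single p (f p) = f := Finsupp.sum_single f
    rw [← hrepr]
    refine Finset.sum_induction _ P hPadd hP0 ?_
    rintro ⟨g, y⟩ hp
    have hne : f (g, y) ≠ 0 := Finsupp.mem_support_iff.mp hp
    have ha : f (g, y) ∈ 𝒜.comp g := (hf (g, y)).1
    have hy : y ∈ α.car (𝒢.s g) := (hf (g, y)).2 hne
    set a := f (g, y) with hadef
    have hu : a = a * 𝒜.proj (𝒢.s g) 1 := (mul_proj_one 𝒜 ha).symm
    have humem : 𝒜.proj (𝒢.s g) 1 ∈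
        ⨆ h ∈ {h : G | y ∈ α.car (𝒢.s h) ∧ α.act h y = x},
          (𝒜.comp (𝒢.inv h) * 𝒜.comp h : Submodule k A) := by
      rw [hsum y]
      have hmem : 𝒜.proj (𝒢.s g) 1 ∈ 𝒜.comp (𝒢.s (𝒢.s g)) := by
        rw [𝒢.s_s]; exact proj_mem 𝒜 _ 1
      exact le_iSup (fun g' => 𝒜.comp (𝒢.s g')) (𝒢.s g) hmem
    suffices hkey : ∀ u ∈ (⨆ h ∈ {h : G | y ∈ α.car (𝒢.s h) ∧ α.act h y = x},
        (𝒜.comp (𝒢.inv h) * 𝒜.comp h : Submodule k A)),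
        P (Finsupp.single ((g, y) : G × X) (a * u)) by
      have h2 := hkey _ humem
      rwa [← hu] at h2
    intro u hu'
    rw [iSup_subtype'] at hu'
    refine Submodule.iSup_induction
      (motive := fun u => P (Finsupp.single ((g, y) : G × X) (a * u))) _ hu' ?_ ?_ ?_
    · rintro ⟨h, hyh, hhx⟩ u' hu''
      have hsgh : 𝒢.s g = 𝒢.s h := split_unique α hsplit (𝒢.s_s g) hy (𝒢.s_s h) hyh
      refine Submodule.mul_induction_on
        (C := fun u' => P (Finsupp.single ((g, y) : G × X) (a * u'))) hu'' ?_ ?_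
      · intro b hb c hc
        have hcomp1 : 𝒢.s g = 𝒢.t (𝒢.inv h) := by rw [𝒢.t_inv, hsgh]
        have hab : a * b ∈ 𝒜.comp (𝒢.mul g (𝒢.inv h)) := 𝒜.mul_mem _ _ hcomp1 a ha b hb
        have hs1 : 𝒢.s (𝒢.mul g (𝒢.inv h)) = 𝒢.t h := by
          rw [𝒢.s_mul g (𝒢.inv h) hcomp1, 𝒢.s_inv]
        have habc : (a * b) * c ∈ 𝒜.comp g := by
          have h3 := 𝒜.mul_mem _ _ hs1 _ hab c hc
          have h2 : 𝒢.mul (𝒢.mul g (𝒢.inv h)) h = g := by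
            rw [𝒢.mul_assoc g (𝒢.inv h) h hcomp1 (by rw [𝒢.s_inv]), 𝒢.inv_mul, ← hsgh,
              𝒢.mul_src]
          rwa [h2] at h3
        refine ⟨1, fun _ => a * b, fun _ => c, ?_, ?_⟩
        · intro i
          constructor
          · intro h' hproj
            have hh' : h' = 𝒢.mul g (𝒢.inv h) :=
              by_contra fun hne' => hproj (proj_of_mem_ne 𝒜 hab hne')
            rw [hh', hs1, ← car_tgt α h]
            rw [car_tgt α h]
            exact hhx ▸ act_mem_tgt α hyh
          · intro h' hproj
            have hh' : h' = h := by_contra fun hne' => hproj (proj_of_mem_ne 𝒜 hc hne')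
            exact ⟨y, by rw [hh']; exact hyh, by rw [hh']; exact hhx⟩
        · rw [Fin.sum_univ_one, moritaBrack_eq_single α 𝒜 hc hyh hhx habc, mul_assoc]
      · intro u₁ u₂ h₁ h₂
        rw [mul_add, Finsupp.single_add]
        exact hPadd _ _ h₁ h₂
    · simp only [mul_zero, Finsupp.single_zero]; exact hP0
    · intro u₁ u₂ h₁ h₂
      rw [mul_add, Finsupp.single_add]
      exact hPadd _ _ h₁ h₂
  · -- Part 2: surjectivity of `( , )`.
    intro a ha
    set P : A → Prop := fun a₀ => ∃ (n : ℕ) (v w : Fin n → A),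
      (∀ i, v i ∈ Vxset α 𝒜 x ∧ w i ∈ xVset α 𝒜 x) ∧
      a₀ = ∑ i, moritaPair α 𝒜 x (v i) (w i) with hPdef
    have hP0 : P 0 := ⟨0, fun i => i.elim0, fun i => i.elim0, fun i => i.elim0, by simp⟩
    have hPadd : ∀ a₁ a₂, P a₁ → P a₂ → P (a₁ + a₂) := by
      rintro a₁ a₂ ⟨n₁, v₁, w₁, hc₁, rfl⟩ ⟨n₂, v₂, w₂, hc₂, rfl⟩
      refine ⟨n₁ + n₂, Fin.append v₁ v₂, Fin.append w₁ w₂, ?_, ?_⟩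
      · intro i
        refine Fin.addCases (motive := fun i =>
          Fin.append v₁ v₂ i ∈ Vxset α 𝒜 x ∧ Fin.append w₁ w₂ i ∈ xVset α 𝒜 x)
          (fun j => ?_) (fun j => ?_) i
        · simp only [Fin.append_left]; exact hc₁ j
        · simp only [Fin.append_right]; exact hc₂ j
      · rw [Fin.sum_univ_add]
        congr 1
        · exact Finset.sum_congr rfl fun j _ => by rw [Fin.append_left, Fin.append_left]
        · exact Finset.sum_congr rfl fun j _ => by rw [Fin.append_right, Fin.append_right]
    show P a
    have hrepr := sum_proj 𝒜 a
    rw [← hrepr]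
    refine Finset.sum_induction _ P hPadd hP0 ?_
    intro g hg
    have hgne : 𝒜.proj g a ≠ 0 := by
      intro h0
      exact DFinsupp.mem_support_iff.mp hg (Subtype.ext h0)
    have hstab : g ∈ stabilizer α x := ha g hgne
    obtain ⟨hst, hxg, hgx⟩ := hstab
    have hb : 𝒜.proj g a ∈ 𝒜.comp g := proj_mem 𝒜 g a
    set b := 𝒜.proj g a with hbdef
    have hu : b = b * 𝒜.proj (𝒢.s g) 1 := (mul_proj_one 𝒜 hb).symm
    have humem : 𝒜.proj (𝒢.s g) 1 ∈
        ⨆ h ∈ {h : G | x ∈ α.car (𝒢.s h) ∧ α.act h x = x},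
          (𝒜.comp (𝒢.inv h) * 𝒜.comp h : Submodule k A) := by
      rw [hsum x]
      have hmem : 𝒜.proj (𝒢.s g) 1 ∈ 𝒜.comp (𝒢.s (𝒢.s g)) := by
        rw [𝒢.s_s]; exact proj_mem 𝒜 _ 1
      exact le_iSup (fun g' => 𝒜.comp (𝒢.s g')) (𝒢.s g) hmem
    suffices hkey : ∀ u ∈ (⨆ h ∈ {h : G | x ∈ α.car (𝒢.s h) ∧ α.act h x = x},
        (𝒜.comp (𝒢.inv h) * 𝒜.comp h : Submodule k A)), P (b * u) by
      have h2 := hkey _ humem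
      rwa [← hu] at h2
    intro u hu'
    rw [iSup_subtype'] at hu'
    refine Submodule.iSup_induction (motive := fun u => P (b * u)) _ hu' ?_ ?_ ?_
    · rintro ⟨h, hxh, hhx⟩ u' hu''
      have hsgh : 𝒢.s g = 𝒢.s h := split_unique α hsplit (𝒢.s_s g) hxg (𝒢.s_s h) hxh
      refine Submodule.mul_induction_on (C := fun u' => P (b * u')) hu'' ?_ ?_
      · intro m hm n hn
        have hcomp1 : 𝒢.s g = 𝒢.t (𝒢.inv h) := by rw [𝒢.t_inv, hsgh]
        have hbm : b * m ∈ 𝒜.comp (𝒢.mul g (𝒢.inv h)) := 𝒜.mul_mem _ _ hcomp1 b hb m hm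
        have hs1 : 𝒢.s (𝒢.mul g (𝒢.inv h)) = 𝒢.t h := by
          rw [𝒢.s_mul g (𝒢.inv h) hcomp1, 𝒢.s_inv]
        have hbmn : (b * m) * n ∈ 𝒜.comp g := by
          have h3 := 𝒜.mul_mem _ _ hs1 _ hbm n hn
          have h2 : 𝒢.mul (𝒢.mul g (𝒢.inv h)) h = g := by
            rw [𝒢.mul_assoc g (𝒢.inv h) h hcomp1 (by rw [𝒢.s_inv]), 𝒢.inv_mul, ← hsgh,
              𝒢.mul_src]
          rwa [h2] at h3
        have hxth : x ∈ α.car (𝒢.t h) := hhx ▸ act_mem_tgt α hxh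
        have hinv : α.act (𝒢.inv h) x = x := act_inv_fixed α hxh hhx
        have hfix : α.act (𝒢.mul g (𝒢.inv h)) x = x := by
          rw [← α.act_mul g (𝒢.inv h) hcomp1 x (by rw [car_inv, 𝒢.s_inv]; exact hxth),
            hinv, hgx]
        refine ⟨1, fun _ => b * m, fun _ => n, ?_, ?_⟩
        · intro i
          constructor
          · intro h' hproj
            have hh' : h' = 𝒢.mul g (𝒢.inv h) :=
              by_contra fun hne' => hproj (proj_of_mem_ne 𝒜 hbm hne')
            exact ⟨x, by rw [hh', hs1]; exact hxth, by rw [hh']; exact hfix⟩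
          · intro h' hproj
            have hh' : h' = h := by_contra fun hne' => hproj (proj_of_mem_ne 𝒜 hn hne')
            rw [hh']; exact hxh
        · rw [Fin.sum_univ_one, moritaPair_eq α 𝒜 hbmn ⟨hst, hxg, hgx⟩, mul_assoc]
      · intro u₁ u₂ h₁ h₂
        rw [mul_add]
        exact hPadd _ _ h₁ h₂
    · simp only [mul_zero]; exact hP0
    · intro u₁ u₂ h₁ h₂
      rw [mul_add]
      exact hPadd _ _ h₁ h₂


end
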